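/- Let C be a compact Hermitian operator and D₁ a compact real diagonal operator on a separable Hilbert space. Suppose there exists a nonzero Hermitian trace-class operator X with ⟨X e_n, e_n⟩ = 0 for all n, |tr(X(C+D₁))| = ‖C+D₁‖·‖X‖₁, and E₊X⁺ = X⁺, E₋X⁻ = X⁻ where E₊, E₋ are the spectral projections onto the maximal and minimal eigenvalues of C+D₁. Then C+D₁ is minimal: ‖C+D₁‖ ≤ ‖C+D‖ for all compact real diagonal D. -/

import Mathlib

open scoped InnerProductSpace
open ContinuousLinearMap

noncomputable section

variable {H : Type*} [NormedAddCommGroup H] [InnerProductSpace ℂ H] [CompleteSpace H]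

/-- The absolute value `|A| = (A^*A)^{1/2}` of an operator. -/
def opAbs (A : H →L[ℂ] H) : H →L[ℂ] H := CFC.sqrt (ContinuousLinearMap.adjoint A * A)

/-- The trace of an operator computed in the Hilbert basis `e`. -/
def opTrace (e : HilbertBasis ℕ ℂ H) (A : H →L[ℂ] H) : ℂ := ∑' n, ⟪e n, A (e n)⟫_ℂ

/-- The trace norm `‖A‖₁ = tr |A|` computed in the Hilbert basis `e`. -/
def traceNorm (e : HilbertBasis ℕ ℂ H) (A : H →L[ℂ] H) : ℝ :=
  ∑' n, (⟪e n, opAbs A (e n)⟫_ℂ).re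

/-- `A` is trace class: the diagonal of `|A|` is summable. -/
def IsTraceClass (e : HilbertBasis ℕ ℂ H) (A : H →L[ℂ] H) : Prop :=
  Summable fun n => (⟪e n, opAbs A (e n)⟫_ℂ).re

/-- `D` is diagonal in the basis `e` with real diagonal entries. -/
def RealDiag (e : HilbertBasis ℕ ℂ H) (D : H →L[ℂ] H) : Prop :=
  ∀ n, ∃ d : ℝ, D (e n) = (d : ℂ) • e n

/-- Distance from `C` to the compact real diagonal operators, in operator norm. -/
def diagDistK (e : HilbertBasis ℕ ℂ H) (C : H →L[ℂ] H) : ℝ :=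
  ⨅ D : {D : H →L[ℂ] H // IsCompactOperator ⇑D ∧ RealDiag e D}, ‖C + (D : H →L[ℂ] H)‖

/-- Positive part `X⁺ = (|X| + X)/2`. -/
def opPosPart (X : H →L[ℂ] H) : H →L[ℂ] H := (2⁻¹ : ℂ) • (opAbs X + X)

/-- Negative part `X⁻ = (|X| - X)/2`. -/
def opNegPart (X : H →L[ℂ] H) : H →L[ℂ] H := (2⁻¹ : ℂ) • (opAbs X - X)

set_option synthInstance.maxHeartbeats 1000000 in
set_option maxHeartbeats 1000000 in
/-- Parseval identity in the basis `e`. -/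
lemma aux_parseval (e : HilbertBasis ℕ ℂ H) (v : H) :
    HasSum (fun m => ‖⟪e m, v⟫_ℂ‖ ^ 2) (‖v‖ ^ 2) := by
  have h := (e.hasSum_inner_mul_inner v v).mapL Complex.reCLM
  have h2 : ∀ m : ℕ, Complex.reCLM (⟪v, e m⟫_ℂ * ⟪e m, v⟫_ℂ) = ‖⟪e m, v⟫_ℂ‖ ^ 2 := by
    intro m
    have hz : ⟪v, e m⟫_ℂ = (starRingEnd ℂ) ⟪e m, v⟫_ℂ := (inner_conj_symm _ _).symm
    rw [hz, mul_comm, Complex.mul_conj]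
    simp [Complex.normSq_eq_norm_sq, ← Complex.ofReal_pow]
  have h3 : Complex.reCLM ⟪v, v⟫_ℂ = ‖v‖ ^ 2 := by
    rw [inner_self_eq_norm_sq_to_K]
    simp [← Complex.ofReal_pow]
  simpa only [h2, h3] using h

set_option synthInstance.maxHeartbeats 1000000 in
set_option maxHeartbeats 1000000 in
/-- The diagonal entries of a positive operator are real and nonnegative. -/
lemma aux_diag_real (P : H →L[ℂ] H) (hP : 0 ≤ P) (v : H) :
    ⟪v, P v⟫_ℂ = ((⟪v, P v⟫_ℂ).re : ℂ) ∧ 0 ≤ (⟪v, P v⟫_ℂ).re := by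
  obtain ⟨hsa, hpos⟩ := ContinuousLinearMap.isPositive_def'.mp ((P.nonneg_iff_isPositive).mp hP)
  have hconj : (starRingEnd ℂ) ⟪v, P v⟫_ℂ = ⟪v, P v⟫_ℂ := by
    rw [inner_conj_symm, ← ContinuousLinearMap.adjoint_inner_left, hsa.adjoint_eq]
  refine ⟨((Complex.conj_eq_iff_re).mp hconj).symm, ?_⟩
  have h := hpos v
  rw [ContinuousLinearMap.reApplyInnerSelf_apply] at h
  rwa [← inner_conj_symm, RCLike.conj_re] at h

set_option synthInstance.maxHeartbeats 1000000 in
set_option maxHeartbeats 1000000 in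
/-- Trace-norm duality bound for a positive operator with summable diagonal. -/
lemma aux_key (e : HilbertBasis ℕ ℂ H) (P : H →L[ℂ] H) (hP : 0 ≤ P)
    (hsum : Summable fun n => (⟪e n, P (e n)⟫_ℂ).re) (A : H →L[ℂ] H) :
    Summable (fun n => ⟪e n, (P * A) (e n)⟫_ℂ) ∧
    ‖∑' n, ⟪e n, (P * A) (e n)⟫_ℂ‖ ≤ ‖A‖ * ∑' n, (⟪e n, P (e n)⟫_ℂ).re := by
  set S := CFC.sqrt P with hSdef
  have hSnn : (0 : H →L[ℂ] H) ≤ S := CFC.sqrt_nonneg _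
  have hSsa : IsSelfAdjoint S := IsSelfAdjoint.of_nonneg hSnn
  have hSS : S * S = P := CFC.sqrt_mul_sqrt_self P hP
  have hSadj : ∀ v w : H, ⟪v, S w⟫_ℂ = ⟪S v, w⟫_ℂ := fun v w => by
    rw [← ContinuousLinearMap.adjoint_inner_left, hSsa.adjoint_eq]
  have hre : ∀ n, (⟪e n, P (e n)⟫_ℂ).re = ‖S (e n)‖ ^ 2 := by
    intro n
    have h0 : (P : H →L[ℂ] H) (e n) = S (S (e n)) := by rw [← hSS]; rfl
    rw [h0, hSadj, inner_self_eq_norm_sq_to_K]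
    simp [← Complex.ofReal_pow]
  have hdiag : ∀ n, ⟪e n, (P * A) (e n)⟫_ℂ = ⟪S (e n), S (A (e n))⟫_ℂ := by
    intro n
    have : (P * A) (e n) = S (S (A (e n))) := by rw [← hSS]; rfl
    rw [this, hSadj]
  set tb := ∑' n, (⟪e n, P (e n)⟫_ℂ).re with htb
  have hb_sum : Summable (fun n => ‖S (e n)‖ ^ 2) := hsum.congr fun n => hre n
  have hb_tsum : ∑' n, ‖S (e n)‖ ^ 2 = tb := tsum_congr fun n => (hre n).symm
  have htbnn : 0 ≤ tb := by
    rw [← hb_tsum]; exact tsum_nonneg fun n => sq_nonneg _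
  rcases eq_or_lt_of_le (norm_nonneg A) with hA0 | hApos
  · have hA : A = 0 := by rwa [eq_comm, norm_eq_zero] at hA0
    subst hA
    constructor
    · simpa using summable_zero
    · simp
  have hHS : Summable (fun n => ‖S (A (e n))‖ ^ 2) ∧
      ∑' n, ‖S (A (e n))‖ ^ 2 ≤ ‖A‖ ^ 2 * tb := by
    have hstep : ∑' n, ENNReal.ofReal (‖S (A (e n))‖ ^ 2) ≤ ENNReal.ofReal (‖A‖ ^ 2 * tb) := by
      have hpars : ∀ v : H, ∑' m, ENNReal.ofReal (‖⟪e m, v⟫_ℂ‖ ^ 2) = ENNReal.ofReal (‖v‖ ^ 2) := by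
        intro v
        rw [← ENNReal.ofReal_tsum_of_nonneg (fun m => sq_nonneg _) (aux_parseval e v).summable,
          (aux_parseval e v).tsum_eq]
      calc ∑' n, ENNReal.ofReal (‖S (A (e n))‖ ^ 2)
          = ∑' n, ∑' m, ENNReal.ofReal (‖⟪e m, S (A (e n))⟫_ℂ‖ ^ 2) :=
            tsum_congr fun n => (hpars _).symm
        _ = ∑' m, ∑' n, ENNReal.ofReal (‖⟪e m, S (A (e n))⟫_ℂ‖ ^ 2) := ENNReal.tsum_comm
        _ = ∑' m, ENNReal.ofReal (‖(ContinuousLinearMap.adjoint A) (S (e m))‖ ^ 2) := by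
            refine tsum_congr fun m => ?_
            have hterm : ∀ n, ‖⟪e m, S (A (e n))⟫_ℂ‖
                = ‖⟪e n, (ContinuousLinearMap.adjoint A) (S (e m))⟫_ℂ‖ := by
              intro n
              rw [hSadj, ← ContinuousLinearMap.adjoint_inner_left A, ← inner_conj_symm]
              exact (RCLike.norm_conj _)
            simp_rw [hterm]
            exact hpars _
        _ ≤ ∑' m, ENNReal.ofReal (‖A‖ ^ 2 * ‖S (e m)‖ ^ 2) := by
            refine ENNReal.tsum_le_tsum fun m => ENNReal.ofReal_le_ofReal ?_
            have h1 : ‖(ContinuousLinearMap.adjoint A) (S (e m))‖ ≤ ‖A‖ * ‖S (e m)‖ := by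
              calc ‖(ContinuousLinearMap.adjoint A) (S (e m))‖
                  ≤ ‖ContinuousLinearMap.adjoint A‖ * ‖S (e m)‖ :=
                    ContinuousLinearMap.le_opNorm _ _
                _ = ‖A‖ * ‖S (e m)‖ := by
                    rw [ContinuousLinearMap.adjoint.norm_map A]
            calc ‖(ContinuousLinearMap.adjoint A) (S (e m))‖ ^ 2
                ≤ (‖A‖ * ‖S (e m)‖) ^ 2 := by
                    exact pow_le_pow_left₀ (norm_nonneg _) h1 2
              _ = ‖A‖ ^ 2 * ‖S (e m)‖ ^ 2 := by ring
        _ = ENNReal.ofReal (∑' m, ‖A‖ ^ 2 * ‖S (e m)‖ ^ 2) := by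
            rw [ENNReal.ofReal_tsum_of_nonneg (fun m => by positivity) (hb_sum.mul_left _)]
        _ = ENNReal.ofReal (‖A‖ ^ 2 * tb) := by rw [tsum_mul_left, hb_tsum]
    have hfin : ∑' n, ENNReal.ofReal (‖S (A (e n))‖ ^ 2) ≠ ⊤ :=
      (lt_of_le_of_lt hstep ENNReal.ofReal_lt_top).ne
    have hs : Summable (fun n => ‖S (A (e n))‖ ^ 2) := by
      have := ENNReal.summable_toReal hfin
      refine this.congr fun n => ?_
      rw [ENNReal.toReal_ofReal (sq_nonneg _)]
    refine ⟨hs, ?_⟩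
    have heq : ∑' n, ‖S (A (e n))‖ ^ 2
        = (∑' n, ENNReal.ofReal (‖S (A (e n))‖ ^ 2)).toReal := by
      rw [ENNReal.tsum_toReal_eq (fun n => ENNReal.ofReal_ne_top)]
      exact tsum_congr fun n => (ENNReal.toReal_ofReal (sq_nonneg _)).symm
    rw [heq]
    calc (∑' n, ENNReal.ofReal (‖S (A (e n))‖ ^ 2)).toReal
        ≤ (ENNReal.ofReal (‖A‖ ^ 2 * tb)).toReal :=
          ENNReal.toReal_mono ENNReal.ofReal_ne_top hstep
      _ = ‖A‖ ^ 2 * tb := ENNReal.toReal_ofReal (by positivity)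
  set c := ‖A‖ with hc
  have hterm : ∀ n, ‖⟪e n, (P * A) (e n)⟫_ℂ‖
      ≤ (c * ‖S (e n)‖ ^ 2 + ‖S (A (e n))‖ ^ 2 / c) / 2 := by
    intro n
    rw [hdiag]
    refine (norm_inner_le_norm _ _).trans ?_
    set u := ‖S (e n)‖; set v := ‖S (A (e n))‖
    have hdiff : (c * u ^ 2 + v ^ 2 / c) / 2 - u * v = (c * u - v) ^ 2 / (2 * c) := by
      field_simp
      ring
    nlinarith [sq_nonneg (c * u - v),
      div_nonneg (sq_nonneg (c * u - v)) (by positivity : (0:ℝ) ≤ 2 * c)]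
  have hmaj : Summable (fun n => (c * ‖S (e n)‖ ^ 2 + ‖S (A (e n))‖ ^ 2 / c) / 2) :=
    ((hb_sum.mul_left c).add (hHS.1.div_const c)).div_const 2
  have hnorm_sum : Summable (fun n => ‖⟪e n, (P * A) (e n)⟫_ℂ‖) :=
    Summable.of_nonneg_of_le (fun n => norm_nonneg _) hterm hmaj
  refine ⟨hnorm_sum.of_norm, ?_⟩
  calc ‖∑' n, ⟪e n, (P * A) (e n)⟫_ℂ‖
      ≤ ∑' n, ‖⟪e n, (P * A) (e n)⟫_ℂ‖ := norm_tsum_le_tsum_norm hnorm_sum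
    _ ≤ ∑' n, (c * ‖S (e n)‖ ^ 2 + ‖S (A (e n))‖ ^ 2 / c) / 2 :=
        Summable.tsum_le_tsum hterm hnorm_sum hmaj
    _ = ((∑' n, c * ‖S (e n)‖ ^ 2) + (∑' n, ‖S (A (e n))‖ ^ 2 / c)) / 2 := by
        rw [tsum_div_const, Summable.tsum_add (hb_sum.mul_left c) (hHS.1.div_const c)]
    _ = (c * tb + (∑' n, ‖S (A (e n))‖ ^ 2) / c) / 2 := by
        rw [tsum_mul_left, hb_tsum, tsum_div_const]
    _ ≤ (c * tb + (c ^ 2 * tb) / c) / 2 := by gcongr; exact hHS.2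
    _ = c * tb := by field_simp; ring


set_option synthInstance.maxHeartbeats 1000000 in
set_option maxHeartbeats 1000000 in
/-- the existence of a functional witness `X` implies minimality of
`C + D₁` with respect to compact real diagonal perturbations. -/
theorem stmt_13 (e : HilbertBasis ℕ ℂ H) (C D₁ : H →L[ℂ] H)
    (hcomp : IsCompactOperator ⇑C) (hsa : IsSelfAdjoint C)
    (hD₁c : IsCompactOperator ⇑D₁) (hD₁ : RealDiag e D₁)
    (Ep Em : H →L[ℂ] H)
    (hEpsa : IsSelfAdjoint Ep) (hEpidem : Ep * Ep = Ep)
    (hEp : ∀ x : H, Ep x = x ↔ (C + D₁) x = ((sSup (spectrum ℝ (C + D₁)) : ℝ) : ℂ) • x)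
    (hEmsa : IsSelfAdjoint Em) (hEmidem : Em * Em = Em)
    (hEm : ∀ x : H, Em x = x ↔ (C + D₁) x = ((sInf (spectrum ℝ (C + D₁)) : ℝ) : ℂ) • x)
    (X : H →L[ℂ] H) (hX : X ≠ 0) (hXsa : IsSelfAdjoint X) (hXtc : IsTraceClass e X)
    (hXdiag : ∀ n, ⟪e n, X (e n)⟫_ℂ = 0)
    (htr : ‖opTrace e (X * (C + D₁))‖ = ‖C + D₁‖ * traceNorm e X)
    (hXp : Ep * opPosPart X = opPosPart X) (hXm : Em * opNegPart X = opNegPart X) :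
    ∀ D : H →L[ℂ] H, IsCompactOperator ⇑D → RealDiag e D → ‖C + D₁‖ ≤ ‖C + D‖ := by
  intro D hDc hDdiag
  have hXadj : ContinuousLinearMap.adjoint X = X := by
    rw [← ContinuousLinearMap.star_eq_adjoint]; exact hXsa
  have hXXnn : (0 : H →L[ℂ] H) ≤ X * X := by
    have h := star_mul_self_nonneg X
    rwa [hXsa.star_eq] at h
  have habs_def : opAbs X = CFC.sqrt (X * X) := by rw [opAbs, hXadj]
  have habs_cfc : opAbs X = cfc (fun t : ℝ => |t|) X := by
    rw [habs_def]
    have h1 : (0 : H →L[ℂ] H) ≤ cfc (fun t : ℝ => |t|) X := cfc_nonneg fun t _ => abs_nonneg t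
    refine CFC.sqrt_unique ?_ h1
    rw [← cfc_mul _ _ X]
    conv_rhs => rw [← cfc_id ℝ X]
    rw [← cfc_mul _ _ X]
    exact cfc_congr fun t _ => abs_mul_abs_self t
  have habs_nn : (0 : H →L[ℂ] H) ≤ opAbs X := by
    rw [habs_cfc]; exact cfc_nonneg fun t _ => abs_nonneg t
  have habs_sq : opAbs X * opAbs X = X * X := by
    rw [habs_def]; exact CFC.sqrt_mul_sqrt_self _ hXXnn
  have eX : cfc (fun t : ℝ => t) X = X := cfc_id' ℝ X
  have hhalf : ((2⁻¹ : ℂ)) = (((2⁻¹ : ℝ) : ℂ)) := by norm_num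
  -- positivity of the positive part
  have e1 : opAbs X + X = cfc (fun t : ℝ => |t| + t) X := by
    nth_rewrite 2 [← eX]
    rw [habs_cfc, ← cfc_add (a := X) (fun t : ℝ => |t|) (fun t : ℝ => t)]
  have hXp_nn : (0 : H →L[ℂ] H) ≤ opPosPart X := by
    rw [opPosPart, e1, hhalf, Complex.coe_smul, ← cfc_smul (2⁻¹ : ℝ) _ X]
    refine cfc_nonneg fun t _ => ?_
    have := neg_abs_le t
    simp only [smul_eq_mul]
    nlinarith [abs_nonneg t]
  -- positivity of the negative part
  have e2 : opAbs X - X = cfc (fun t : ℝ => |t| - t) X := by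
    nth_rewrite 2 [← eX]
    rw [habs_cfc, ← cfc_sub (fun t : ℝ => |t|) (fun t : ℝ => t) X]
  have hXm_nn : (0 : H →L[ℂ] H) ≤ opNegPart X := by
    rw [opNegPart, e2, hhalf, Complex.coe_smul, ← cfc_smul (2⁻¹ : ℝ) _ X]
    refine cfc_nonneg fun t _ => ?_
    have := le_abs_self t
    simp only [smul_eq_mul]
    nlinarith
  -- diagonal entries
  set a : ℕ → ℝ := fun n => (⟪e n, opAbs X (e n)⟫_ℂ).re with ha
  have habs_diag : ∀ n, ⟪e n, opAbs X (e n)⟫_ℂ = ((a n : ℝ) : ℂ) := fun n =>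
    (aux_diag_real _ habs_nn _).1
  have ha_nn : ∀ n, 0 ≤ a n := fun n => (aux_diag_real _ habs_nn _).2
  have hXtc' : Summable a := hXtc
  have hpd : ∀ n, ⟪e n, opPosPart X (e n)⟫_ℂ = ((a n / 2 : ℝ) : ℂ) := by
    intro n
    have h0 : opPosPart X (e n) = (2⁻¹ : ℂ) • (opAbs X (e n) + X (e n)) := rfl
    rw [h0, inner_smul_right, inner_add_right, habs_diag n, hXdiag n]
    push_cast
    ring
  have hmd : ∀ n, ⟪e n, opNegPart X (e n)⟫_ℂ = ((a n / 2 : ℝ) : ℂ) := by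
    intro n
    have h0 : opNegPart X (e n) = (2⁻¹ : ℂ) • (opAbs X (e n) - X (e n)) := rfl
    rw [h0, inner_smul_right, inner_sub_right, habs_diag n, hXdiag n]
    push_cast
    ring
  have hpd_re : ∀ n, (⟪e n, opPosPart X (e n)⟫_ℂ).re = a n / 2 := fun n => by
    rw [hpd n, Complex.ofReal_re]
  have hmd_re : ∀ n, (⟪e n, opNegPart X (e n)⟫_ℂ).re = a n / 2 := fun n => by
    rw [hmd n, Complex.ofReal_re]
  have hsum_p : Summable (fun n => (⟪e n, opPosPart X (e n)⟫_ℂ).re) :=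
    (hXtc'.div_const 2).congr fun n => (hpd_re n).symm
  have hsum_m : Summable (fun n => (⟪e n, opNegPart X (e n)⟫_ℂ).re) :=
    (hXtc'.div_const 2).congr fun n => (hmd_re n).symm
  have ht_def : traceNorm e X = ∑' n, a n := rfl
  -- positivity of the trace norm
  have htpos : 0 < traceNorm e X := by
    have h0 : 0 ≤ traceNorm e X := by
      rw [ht_def]; exact tsum_nonneg ha_nn
    rcases h0.lt_or_eq with h | h
    · exact h
    exfalso
    have hzero : ∀ n, a n = 0 := by
      intro n
      have hle : a n ≤ ∑' m, a m := Summable.le_tsum hXtc' n fun m _ => ha_nn m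
      rw [← ht_def, ← h] at hle
      exact le_antisymm hle (ha_nn n)
    set S2 := CFC.sqrt (opAbs X) with hS2
    have hS2nn : (0 : H →L[ℂ] H) ≤ S2 := CFC.sqrt_nonneg _
    have hS2sa : IsSelfAdjoint S2 := IsSelfAdjoint.of_nonneg hS2nn
    have hS2S2 : S2 * S2 = opAbs X := CFC.sqrt_mul_sqrt_self _ habs_nn
    have hnormsq : ∀ n, ((‖S2 (e n)‖ : ℝ) : ℂ) ^ 2 = ((a n : ℝ) : ℂ) := by
      intro n
      have h0' : opAbs X (e n) = S2 (S2 (e n)) := by rw [← hS2S2]; rfl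
      rw [← habs_diag n, h0', ← ContinuousLinearMap.adjoint_inner_left, hS2sa.adjoint_eq,
        inner_self_eq_norm_sq_to_K]
      norm_cast
    have hS2z : ∀ n, S2 (e n) = 0 := by
      intro n
      have h1 := hnormsq n
      rw [hzero n] at h1
      have h2 : (‖S2 (e n)‖ : ℝ) ^ 2 = 0 := by
        have := congrArg Complex.re h1
        simpa [← Complex.ofReal_pow] using this
      have h3 : ‖S2 (e n)‖ = 0 := by
        nlinarith [norm_nonneg (S2 (e n))]
      exact norm_eq_zero.mp h3
    have hS2zero : S2 = 0 := by
      have hdense : Dense (↑(Submodule.span ℂ (Set.range ⇑e)) : Set H) :=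
        Submodule.dense_iff_topologicalClosure_eq_top.mpr e.dense_span
      refine ContinuousLinearMap.ext_on hdense ?_
      rintro x ⟨n, rfl⟩
      simp [hS2z n]
    have habs0 : opAbs X = 0 := by rw [← hS2S2, hS2zero, zero_mul]
    have hXX0 : X * X = 0 := by rw [← habs_sq, habs0, zero_mul]
    have hXn : ‖X‖ * ‖X‖ = 0 := by
      rw [← CStarRing.norm_star_mul_self, hXsa.star_eq, hXX0, norm_zero]
    have : ‖X‖ = 0 := by nlinarith [norm_nonneg X]
    exact hX (norm_eq_zero.mp this)
  -- X = X⁺ - X⁻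
  have hsplit : opPosPart X - opNegPart X = X := by
    rw [opPosPart, opNegPart, ← smul_sub]
    have h2 : (opAbs X + X) - (opAbs X - X) = (2 : ℂ) • X := by
      rw [two_smul]; abel
    rw [h2, smul_smul]
    norm_num
  have hdiag_split : ∀ (A : H →L[ℂ] H) n, ⟪e n, (X * A) (e n)⟫_ℂ
      = ⟪e n, (opPosPart X * A) (e n)⟫_ℂ - ⟪e n, (opNegPart X * A) (e n)⟫_ℂ := by
    intro A n
    rw [← inner_sub_right]
    congr 1
    have h1 : (opPosPart X * A) (e n) - (opNegPart X * A) (e n)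
        = ((opPosPart X - opNegPart X) * A) (e n) := by
      simp [ContinuousLinearMap.mul_apply, ContinuousLinearMap.sub_apply]
    rw [h1, hsplit]
  -- the traces against C + D and C + D₁ agree
  have hTreq : opTrace e (X * (C + D)) = opTrace e (X * (C + D₁)) := by
    refine tsum_congr fun n => ?_
    obtain ⟨d, hd⟩ := hDdiag n
    obtain ⟨d₁, hd₁⟩ := hD₁ n
    have h1 : (X * (C + D)) (e n) = X (C (e n)) + (d : ℂ) • X (e n) := by
      simp [ContinuousLinearMap.mul_apply, ContinuousLinearMap.add_apply, hd, map_smul]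
    have h2 : (X * (C + D₁)) (e n) = X (C (e n)) + (d₁ : ℂ) • X (e n) := by
      simp [ContinuousLinearMap.mul_apply, ContinuousLinearMap.add_apply, hd₁, map_smul]
    rw [h1, h2, inner_add_right, inner_add_right, inner_smul_right, inner_smul_right, hXdiag n]
    ring
  -- the duality bound for C + D
  have hkeyP := aux_key e (opPosPart X) hXp_nn hsum_p (C + D)
  have hkeyM := aux_key e (opNegPart X) hXm_nn hsum_m (C + D)
  have htsum_p : ∑' n, (⟪e n, opPosPart X (e n)⟫_ℂ).re = traceNorm e X / 2 := by
    calc ∑' n, (⟪e n, opPosPart X (e n)⟫_ℂ).re = ∑' n, a n / 2 := tsum_congr hpd_re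
      _ = (∑' n, a n) / 2 := tsum_div_const
      _ = traceNorm e X / 2 := by rw [ht_def]
  have htsum_m : ∑' n, (⟪e n, opNegPart X (e n)⟫_ℂ).re = traceNorm e X / 2 := by
    calc ∑' n, (⟪e n, opNegPart X (e n)⟫_ℂ).re = ∑' n, a n / 2 := tsum_congr hmd_re
      _ = (∑' n, a n) / 2 := tsum_div_const
      _ = traceNorm e X / 2 := by rw [ht_def]
  have hbound : ‖opTrace e (X * (C + D))‖ ≤ ‖C + D‖ * traceNorm e X := by
    have hsplit_tsum : opTrace e (X * (C + D)) =
        (∑' n, ⟪e n, (opPosPart X * (C + D)) (e n)⟫_ℂ)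
          - ∑' n, ⟪e n, (opNegPart X * (C + D)) (e n)⟫_ℂ := by
      rw [opTrace]
      calc ∑' n, ⟪e n, (X * (C + D)) (e n)⟫_ℂ
          = ∑' n, (⟪e n, (opPosPart X * (C + D)) (e n)⟫_ℂ
            - ⟪e n, (opNegPart X * (C + D)) (e n)⟫_ℂ) :=
            tsum_congr fun n => hdiag_split (C + D) n
        _ = _ := (hkeyP.1.hasSum.sub hkeyM.1.hasSum).tsum_eq
    rw [hsplit_tsum]
    calc ‖(∑' n, ⟪e n, (opPosPart X * (C + D)) (e n)⟫_ℂ)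
          - ∑' n, ⟪e n, (opNegPart X * (C + D)) (e n)⟫_ℂ‖
        ≤ ‖∑' n, ⟪e n, (opPosPart X * (C + D)) (e n)⟫_ℂ‖
          + ‖∑' n, ⟪e n, (opNegPart X * (C + D)) (e n)⟫_ℂ‖ := norm_sub_le _ _
      _ ≤ ‖C + D‖ * (traceNorm e X / 2) + ‖C + D‖ * (traceNorm e X / 2) := by
          refine add_le_add ?_ ?_
          · have h := hkeyP.2
            rwa [htsum_p] at h
          · have h := hkeyM.2
            rwa [htsum_m] at h
      _ = ‖C + D‖ * traceNorm e X := by ring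
  have hfinal : ‖C + D₁‖ * traceNorm e X ≤ ‖C + D‖ * traceNorm e X := by
    rw [← htr, ← hTreq]
    exact hbound
  exact le_of_mul_le_mul_right hfinal htpos
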